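/- Let α > 1, b = 4^{1/(1−α)}, and M = 3/((1−b)^{1−α} − 1). Then 0 < b < 1, M > 0, and the inequality M ≥ M(1−b)^α + 4Mb^α + 2(1−b)^α + ε holds for all sufficiently small ε > 0; equivalently, M(1−b−(1−b)^α) ≥ 2(1−b)^α with the substitution b = 4b^α. -/

import Mathlib

/-- Parameter check for the zigzag-golf recursion: with `α > 1`,
`b = 4^{1/(1-α)}` and `M = 3/((1-b)^{1-α} - 1)`, one has `0 < b < 1`, `M > 0`,
`b = 4·b^α`, the inequality
`M ≥ M(1-b)^α + 4M b^α + 2(1-b)^α + ε` for all sufficiently small `ε > 0`,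
and equivalently `M(1-b-(1-b)^α) ≥ 2(1-b)^α`. -/
theorem zigzag_golf_parameters (α : ℝ) (hα : 1 < α)
    (b M : ℝ) (hb : b = (4 : ℝ) ^ ((1 : ℝ) / (1 - α)))
    (hM : M = 3 / ((1 - b) ^ (1 - α) - 1)) :
    0 < b ∧ b < 1 ∧ 0 < M ∧ b = 4 * b ^ α ∧
      (∃ ε₀ > (0 : ℝ), ∀ ε, 0 < ε → ε < ε₀ →
        M * (1 - b) ^ α + 4 * M * b ^ α + 2 * (1 - b) ^ α + ε ≤ M) ∧
      M * (1 - b - (1 - b) ^ α) ≥ 2 * (1 - b) ^ α := by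
  have h1α : 1 - α < 0 := by linarith
  have h1αne : (1 - α) ≠ 0 := ne_of_lt h1α
  have hb0 : 0 < b := hb ▸ Real.rpow_pos_of_pos (by norm_num) _
  have hb1 : b < 1 := by
    rw [hb]
    exact Real.rpow_lt_one_of_one_lt_of_neg (by norm_num)
      (div_neg_of_pos_of_neg one_pos h1α)
  have h1b0 : 0 < 1 - b := by linarith
  set T := (1 - b) ^ (1 - α) with hT
  have hT1 : 1 < T := Real.one_lt_rpow_of_pos_of_lt_one_of_neg h1b0 (by linarith) h1α
  set t := T - 1 with ht
  have ht0 : 0 < t := by rw [ht]; linarith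
  have hM0 : 0 < M := by rw [hM]; positivity
  set A := (1 - b) ^ α with hA
  have hA0 : 0 < A := Real.rpow_pos_of_pos h1b0 _
  have hAT : A * T = 1 - b := by
    rw [hA, hT, ← Real.rpow_add h1b0]
    norm_num
  have hbα : b = 4 * b ^ α := by
    have key : (1 : ℝ)/(1-α) = 1 + 1/(1-α)*α := by field_simp; ring
    rw [hb, ← Real.rpow_mul (by norm_num : (0:ℝ) ≤ 4)]
    conv_lhs => rw [key]
    rw [Real.rpow_add (by norm_num : (0:ℝ) < 4), Real.rpow_one]
  have h1 : 1 - b - A = A * t := by rw [← hAT, ht]; ring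
  have hkey : M * (1 - b - A) = 3 * A := by
    rw [hM, h1]
    field_simp
  have hkey' : M - M * b - M * A = 3 * A := by linear_combination hkey
  have h4 : M * b = 4 * M * b ^ α := by nth_rewrite 1 [hbα]; ring
  refine ⟨hb0, hb1, hM0, hbα, ⟨A, hA0, fun ε hε hεA => ?_⟩, by linarith⟩
  linarith
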